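/- (Proposition 1) Let A > 0, B > 0, α > 0, D > 0, and let τ⁻¹ ≤ 2Aα/3. Set r₀ = √(B/(A − τ⁻¹/α)) (well-defined since A − τ⁻¹/α ≥ A/3 > 0), and let J be the 2×2 real matrix with rows (−α·r₀, −τ⁻¹/(2r₀²)) and (2D, (D/r₀³)·(3τ⁻¹/α − 2A)). Then every complex eigenvalue of J has negative real part; i.e., the SRK equilibrium (S₀, r₀²) is linearly stable. -/
import Mathlib


/-- Proposition 1: for `τ⁻¹ ≤ 2Aα/3`, every complex eigenvalue of the SRK
Jacobian at the equilibrium has negative real part (linear stability). -/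
theorem srk_stability (A B α D τinv : ℝ) (hA : 0 < A) (hB : 0 < B)
    (hα : 0 < α) (hD : 0 < D) (hτ : τinv ≤ 2 * A * α / 3)
    (r0 : ℝ) (hr0 : r0 = Real.sqrt (B / (A - τinv / α)))
    (J : Matrix (Fin 2) (Fin 2) ℝ)
    (hJ : J = !![-(α * r0), -(τinv / (2 * r0 ^ 2));
                 2 * D, (D / r0 ^ 3) * (3 * τinv / α - 2 * A)]) :
    ∀ (μ : ℂ) (v : Fin 2 → ℂ), v ≠ 0 →
      (J.map (Complex.ofReal)).mulVec v = μ • v → μ.re < 0 := by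
  intro μ v hv hev
  -- positivity of r0
  have h3τ : 3 * τinv / α ≤ 2 * A := by
    rw [div_le_iff₀ hα]; nlinarith
  have hc : 0 < A - τinv / α := by
    have : τinv / α ≤ 2 * A / 3 := by
      rw [div_le_div_iff₀ hα (by norm_num : (0:ℝ) < 3)]; nlinarith
    linarith
  have hr0pos : 0 < r0 := by
    rw [hr0]; exact Real.sqrt_pos.mpr (div_pos hB hc)
  have hr0ne : r0 ≠ 0 := ne_of_gt hr0pos
  set a : ℝ := -(α * r0) with ha
  set b : ℝ := -(τinv / (2 * r0 ^ 2)) with hb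
  set c : ℝ := 2 * D with hcdef
  set d : ℝ := (D / r0 ^ 3) * (3 * τinv / α - 2 * A) with hd
  -- trace < 0, det > 0
  have hT : a + d < 0 := by
    have h1 : d ≤ 0 := by
      apply mul_nonpos_of_nonneg_of_nonpos
      · positivity
      · linarith
    nlinarith
  have hΔ : 0 < a * d - b * c := by
    have heq : a * d - b * c = 2 * D * (A * α - τinv) / r0 ^ 2 := by
      rw [ha, hb, hcdef, hd]; field_simp; ring
    rw [heq]
    apply div_pos _ (by positivity)
    have : τinv < A * α := by nlinarith
    nlinarith
  -- determinant of J - μ I is zero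
  have hdet : ((J.map Complex.ofReal) - μ • 1).det = 0 := by
    apply Matrix.exists_mulVec_eq_zero_iff.mp
    refine ⟨v, hv, ?_⟩
    rw [Matrix.sub_mulVec, hev, Matrix.smul_mulVec, Matrix.one_mulVec, sub_self]
  have hE : ((a:ℂ) - μ) * ((d:ℂ) - μ) - (b:ℂ) * (c:ℂ) = 0 := by
    rw [Matrix.det_fin_two] at hdet
    subst hJ
    simp [Matrix.map_apply, Matrix.sub_apply, Matrix.smul_apply, Matrix.one_apply,
      ← ha, ← hb, ← hcdef, ← hd] at hdet ⊢
    linear_combination hdet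
  -- split into real and imaginary parts
  rw [Complex.ext_iff] at hE
  obtain ⟨h1, h2⟩ := hE
  simp [Complex.mul_re, Complex.mul_im, Complex.sub_re, Complex.sub_im,
    Complex.ofReal_re, Complex.ofReal_im] at h1 h2
  set x := μ.re
  set y := μ.im
  by_contra hx
  push_neg at hx
  have him : y * (2 * x - (a + d)) = 0 := by linarith [h2]
  rcases mul_eq_zero.mp him with hy | hxx
  · rw [hy] at h1
    nlinarith [h1]
  · nlinarith
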